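/- Let a, b, m, n be positive integers with gcd(a,b) = 1, gcd(m,n) = 1, a − b odd, and m − n odd. Then the integers gcd(a·m + b·n, a·n + b·m) and gcd(|a·m − b·n|, |a·n − b·m|) are coprime; in particular no prime divides both. -/

import Mathlib

/-- Disjointness of the two Gaussian gcds: `gcd(am+bn, an+bm)` and
`gcd(|am−bn|, |an−bm|)` are coprime; in particular no prime divides both.
(`Int.gcd` returns a natural number and is insensitive to sign, so the
absolute values are built in.) -/
theorem stmt_4 (a b m n : ℤ)
    (ha : 0 < a) (hb : 0 < b) (hm : 0 < m) (hn : 0 < n)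
    (hcop_ab : Int.gcd a b = 1) (hcop_mn : Int.gcd m n = 1)
    (hodd_ab : Odd (a - b)) (hodd_mn : Odd (m - n)) :
    Nat.Coprime (Int.gcd (a * m + b * n) (a * n + b * m))
      (Int.gcd (a * m - b * n) (a * n - b * m)) ∧
    ∀ p : ℕ, p.Prime →
      ¬ (p ∣ Int.gcd (a * m + b * n) (a * n + b * m) ∧
         p ∣ Int.gcd (a * m - b * n) (a * n - b * m)) := by
  have key : ∀ p : ℕ, p.Prime →
      ¬ (p ∣ Int.gcd (a * m + b * n) (a * n + b * m) ∧
         p ∣ Int.gcd (a * m - b * n) (a * n - b * m)) := by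
    rintro p hp ⟨h1, h2⟩
    have hP : Prime (p : ℤ) := Nat.prime_iff_prime_int.mp hp
    have d1 : (p : ℤ) ∣ a * m + b * n :=
      dvd_trans (Int.natCast_dvd_natCast.mpr h1) (Int.gcd_dvd_left _ _)
    have d2 : (p : ℤ) ∣ a * n + b * m :=
      dvd_trans (Int.natCast_dvd_natCast.mpr h1) (Int.gcd_dvd_right _ _)
    have d3 : (p : ℤ) ∣ a * m - b * n :=
      dvd_trans (Int.natCast_dvd_natCast.mpr h2) (Int.gcd_dvd_left _ _)
    have d4 : (p : ℤ) ∣ a * n - b * m :=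
      dvd_trans (Int.natCast_dvd_natCast.mpr h2) (Int.gcd_dvd_right _ _)
    have h2am : (p : ℤ) ∣ 2 * (a * m) := by
      rw [show 2 * (a * m) = (a * m + b * n) + (a * m - b * n) by ring]
      exact dvd_add d1 d3
    have h2bn : (p : ℤ) ∣ 2 * (b * n) := by
      rw [show 2 * (b * n) = (a * m + b * n) - (a * m - b * n) by ring]
      exact dvd_sub d1 d3
    have h2an : (p : ℤ) ∣ 2 * (a * n) := by
      rw [show 2 * (a * n) = (a * n + b * m) + (a * n - b * m) by ring]
      exact dvd_add d2 d4
    have h2bm : (p : ℤ) ∣ 2 * (b * m) := by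
      rw [show 2 * (b * m) = (a * n + b * m) - (a * n - b * m) by ring]
      exact dvd_sub d2 d4
    -- parity: (am+bn)+(an+bm) = (a+b)(m+n) is odd, so p ≠ 2
    have hoab : Odd (a + b) := by
      obtain ⟨k, hk⟩ := hodd_ab
      exact ⟨k + b, by linarith⟩
    have homn : Odd (m + n) := by
      obtain ⟨k, hk⟩ := hodd_mn
      exact ⟨k + n, by linarith⟩
    have hodd_sum : Odd ((a * m + b * n) + (a * n + b * m)) := by
      rw [show (a * m + b * n) + (a * n + b * m) = (a + b) * (m + n) by ring]
      exact hoab.mul homn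
    have hp2 : p ≠ 2 := by
      rintro rfl
      have e1 : Even (a * m + b * n) :=
        (even_iff_two_dvd).mpr (by exact_mod_cast d1)
      have e2 : Even (a * n + b * m) :=
        (even_iff_two_dvd).mpr (by exact_mod_cast d2)
      exact (Int.not_odd_iff_even.mpr (e1.add e2)) hodd_sum
    have hpd2 : ¬ (p : ℤ) ∣ 2 := by
      intro h
      exact hp2 ((Nat.prime_dvd_prime_iff_eq hp Nat.prime_two).mp
        (by exact_mod_cast h))
    have ham : (p : ℤ) ∣ a * m := (hP.dvd_mul.mp h2am).resolve_left hpd2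
    have hbn : (p : ℤ) ∣ b * n := (hP.dvd_mul.mp h2bn).resolve_left hpd2
    have han : (p : ℤ) ∣ a * n := (hP.dvd_mul.mp h2an).resolve_left hpd2
    have hbm : (p : ℤ) ∣ b * m := (hP.dvd_mul.mp h2bm).resolve_left hpd2
    have hnab : ¬ ((p : ℤ) ∣ a ∧ (p : ℤ) ∣ b) := by
      rintro ⟨x, y⟩
      have := Int.dvd_coe_gcd x y
      rw [hcop_ab] at this
      exact hP.not_dvd_one (by exact_mod_cast this)
    have hnmn : ¬ ((p : ℤ) ∣ m ∧ (p : ℤ) ∣ n) := by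
      rintro ⟨x, y⟩
      have := Int.dvd_coe_gcd x y
      rw [hcop_mn] at this
      exact hP.not_dvd_one (by exact_mod_cast this)
    rcases hP.dvd_mul.mp ham with pa | pm
    · have pnb : ¬ (p : ℤ) ∣ b := fun h => hnab ⟨pa, h⟩
      have pn := (hP.dvd_mul.mp hbn).resolve_left pnb
      have pm := (hP.dvd_mul.mp hbm).resolve_left pnb
      exact hnmn ⟨pm, pn⟩
    · rcases hP.dvd_mul.mp han with pa | pn
      · have pnb : ¬ (p : ℤ) ∣ b := fun h => hnab ⟨pa, h⟩
        have pn := (hP.dvd_mul.mp hbn).resolve_left pnb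
        exact hnmn ⟨pm, pn⟩
      · exact hnmn ⟨pm, pn⟩
  refine ⟨?_, key⟩
  by_contra h
  obtain ⟨p, hp, hpd⟩ := Nat.exists_prime_and_dvd h
  exact key p hp ⟨hpd.trans (Nat.gcd_dvd_left _ _), hpd.trans (Nat.gcd_dvd_right _ _)⟩
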